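/- arXiv:1610.02962 — 5 statements merged into one kernel-verified Lean document; each statement's English description precedes it below -/
import Mathlib

section
/- The optimal value of the rank-constrained least-squares problem decomposes as: min over A ∈ ℝ^{n×n} with rank(A) ≤ k of ‖Y − A·X‖_F² equals (min over B ∈ ℝ^{n×m} with rank(B) ≤ k of ‖Z − B‖_F²) plus ‖Y·(I_m − Π)‖_F², where I_m is the m×m identity matrix. -/
open Matrix

noncomputable def frobNorm {p q : ℕ} (A : Matrix (Fin p) (Fin q) ℝ) : ℝ :=
  Real.sqrt (∑ i, ∑ j, (A i j) ^ 2)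

lemma frobNorm_sq {p q : ℕ} (A : Matrix (Fin p) (Fin q) ℝ) :
    frobNorm A ^ 2 = ∑ i, ∑ j, (A i j) ^ 2 := by
  apply Real.sq_sqrt
  positivity

lemma frobNorm_sq_nonneg {p q : ℕ} (A : Matrix (Fin p) (Fin q) ℝ) :
    0 ≤ frobNorm A ^ 2 := sq_nonneg _

lemma pyth {p q : ℕ} (M N : Matrix (Fin p) (Fin q) ℝ) (h : M * Nᵀ = 0) :
    frobNorm (M + N) ^ 2 = frobNorm M ^ 2 + frobNorm N ^ 2 := by
  simp only [frobNorm_sq]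
  have hcross : ∑ i, ∑ j, M i j * N i j = 0 := by
    have : ∀ i, (M * Nᵀ) i i = 0 := fun i => by rw [h]; rfl
    calc ∑ i, ∑ j, M i j * N i j = ∑ i, (M * Nᵀ) i i := by
          refine Finset.sum_congr rfl fun i _ => ?_
          simp [Matrix.mul_apply, Matrix.transpose_apply]
      _ = 0 := by simp [this]
  have : ∑ i, ∑ j, ((M + N) i j) ^ 2
      = (∑ i, ∑ j, (M i j) ^ 2) + 2 * (∑ i, ∑ j, M i j * N i j)
        + (∑ i, ∑ j, (N i j) ^ 2) := by
    simp only [Matrix.add_apply, add_sq, Finset.sum_add_distrib, Finset.mul_sum]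
    ring
  rw [this, hcross]; ring

/-- Decomposition of the optimal value of the rank-constrained least-squares problem:
`min_{rank A ≤ k} ‖Y - A X‖_F² = min_{rank B ≤ k} ‖Z - B‖_F² + ‖Y (I - Π)‖_F²`
where `Π = G X` and `Z = Y Π`. -/
theorem stmt_1 (n m k : ℕ) (hk : 0 < k) (hkm : k ≤ m) (hmn : m ≤ n)
    (X Y : Matrix (Fin n) (Fin m) ℝ) (G : Matrix (Fin m) (Fin n) ℝ)
    (hG1 : X * G * X = X) (hG2 : G * X * G = G)
    (hG3 : (X * G)ᵀ = X * G) (hG4 : (G * X)ᵀ = G * X) :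
    sInf {e : ℝ | ∃ A : Matrix (Fin n) (Fin n) ℝ, A.rank ≤ k ∧
        e = frobNorm (Y - A * X) ^ 2} =
      sInf {e : ℝ | ∃ B : Matrix (Fin n) (Fin m) ℝ, B.rank ≤ k ∧
        e = frobNorm (Y * (G * X) - B) ^ 2} +
      frobNorm (Y * (1 - G * X)) ^ 2 := by
  set P : Matrix (Fin m) (Fin m) ℝ := G * X with hP
  have hPP : P * P = P := by
    rw [hP, ← Matrix.mul_assoc, hG2]
  have hXP : X * P = X := by rw [hP, ← Matrix.mul_assoc, hG1]
  have hPt : Pᵀ = P := hG4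
  have h1Pt : (1 - P)ᵀ = 1 - P := by
    rw [Matrix.transpose_sub, Matrix.transpose_one, hPt]
  -- key: if M * (1 - P) = 0 then M * (W * (1-P))ᵀ = 0
  have key : ∀ (M W : Matrix (Fin n) (Fin m) ℝ), M * (1 - P) = 0 →
      M * (W * (1 - P))ᵀ = 0 := by
    intro M W hM
    rw [Matrix.transpose_mul, h1Pt, ← Matrix.mul_assoc, hM, Matrix.zero_mul]
  set S1 := {e : ℝ | ∃ A : Matrix (Fin n) (Fin n) ℝ, A.rank ≤ k ∧
        e = frobNorm (Y - A * X) ^ 2} with hS1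
  set S2 := {e : ℝ | ∃ B : Matrix (Fin n) (Fin m) ℝ, B.rank ≤ k ∧
        e = frobNorm (Y * P - B) ^ 2} with hS2
  have hS1ne : S1.Nonempty := ⟨frobNorm (Y - 0 * X) ^ 2, 0, by simp [Matrix.rank_zero], rfl⟩
  have hS2ne : S2.Nonempty := ⟨frobNorm (Y * P - 0) ^ 2, 0, by simp [Matrix.rank_zero], rfl⟩
  have hS1bdd : BddBelow S1 := ⟨0, fun e ⟨A, _, he⟩ => he ▸ frobNorm_sq_nonneg _⟩
  have hS2bdd : BddBelow S2 := ⟨0, fun e ⟨B, _, he⟩ => he ▸ frobNorm_sq_nonneg _⟩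
  set c := frobNorm (Y * (1 - P)) ^ 2 with hc
  -- decomposition for any A
  have hdec : ∀ A : Matrix (Fin n) (Fin n) ℝ,
      frobNorm (Y - A * X) ^ 2 = frobNorm (Y * P - A * X) ^ 2 + c := by
    intro A
    have horth : (Y * P - A * X) * (1 - P) = 0 := by
      rw [Matrix.sub_mul, Matrix.mul_sub, Matrix.mul_sub, Matrix.mul_one,
        Matrix.mul_assoc Y P P, hPP, Matrix.mul_assoc A X P, hXP]
      simp
    have heq : Y - A * X = (Y * P - A * X) + Y * (1 - P) := by
      rw [Matrix.mul_sub, Matrix.mul_one]; abel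
    rw [heq, pyth _ _ (key _ _ horth)]
  apply le_antisymm
  · rw [← sub_le_iff_le_add]
    apply le_csInf hS2ne
    rintro e ⟨B, hBrk, rfl⟩
    rw [sub_le_iff_le_add]
    have hmem : frobNorm (Y - (B * G) * X) ^ 2 ∈ S1 :=
      ⟨B * G, le_trans (Matrix.rank_mul_le_left B G) hBrk, rfl⟩
    calc sInf S1 ≤ frobNorm (Y - (B * G) * X) ^ 2 := csInf_le hS1bdd hmem
      _ ≤ frobNorm (Y * P - B) ^ 2 + c := by
          rw [hdec]
          have hle : frobNorm (Y * P - B * G * X) ^ 2 ≤ frobNorm (Y * P - B) ^ 2 := by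
            have hBGX : B * G * X = B * P := by rw [hP, Matrix.mul_assoc]
            have horth : (Y * P - B * P) * (1 - P) = 0 := by
              rw [Matrix.sub_mul, Matrix.mul_sub, Matrix.mul_sub, Matrix.mul_one,
                Matrix.mul_assoc Y P P, hPP, Matrix.mul_assoc B P P, hPP]
              simp
            have heq2 : Y * P - B = (Y * P - B * P) + (-B) * (1 - P) := by
              rw [Matrix.neg_mul, Matrix.mul_sub, Matrix.mul_one]; abel
            rw [hBGX, heq2, pyth _ _ (key _ _ horth)]
            have : 0 ≤ frobNorm ((-B) * (1 - P)) ^ 2 := frobNorm_sq_nonneg _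
            linarith
          linarith
  · apply le_csInf hS1ne
    rintro e ⟨A, hArk, rfl⟩
    rw [hdec A]
    have hmem : frobNorm (Y * P - A * X) ^ 2 ∈ S2 :=
      ⟨A * X, le_trans (Matrix.rank_mul_le_left A X) hArk, rfl⟩
    have := csInf_le hS2bdd hmem
    linarith
end

section
/- If X has full rank m, then the rank-constrained regression problem reduces to low-rank matrix approximation of Y: min over A ∈ ℝ^{n×n} with rank(A) ≤ k of ‖Y − A·X‖_F² equals min over B ∈ ℝ^{n×m} with rank(B) ≤ k of ‖Y − B‖_F². -/
open Matrix

/-- If `X` has full rank `m`, the rank-constrained regression problem reduces to low-rank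
approximation of `Y`. -/
theorem stmt_4 (n m k : ℕ) (hk : 0 < k) (hkm : k ≤ m) (hmn : m ≤ n)
    (X Y : Matrix (Fin n) (Fin m) ℝ) (hX : X.rank = m) :
    sInf {e : ℝ | ∃ A : Matrix (Fin n) (Fin n) ℝ, A.rank ≤ k ∧
        e = frobNorm (Y - A * X) ^ 2} =
      sInf {e : ℝ | ∃ B : Matrix (Fin n) (Fin m) ℝ, B.rank ≤ k ∧
        e = frobNorm (Y - B) ^ 2} := by
  set M : Matrix (Fin m) (Fin m) ℝ := Xᵀ * X with hM
  have hMrank : M.rank = m := by rw [hM, Matrix.rank_transpose_mul_self, hX]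
  have hMunit : IsUnit M := by
    rw [← Matrix.mulVec_surjective_iff_isUnit]
    intro v
    have hrange : LinearMap.range M.mulVecLin = ⊤ := by
      apply Submodule.eq_top_of_finrank_eq
      rw [show Module.finrank ℝ (LinearMap.range M.mulVecLin) = M.rank from rfl, hMrank]
      simp [Module.finrank_fintype_fun_eq_card]
    have := hrange ▸ Submodule.mem_top (x := v) (R := ℝ)
    obtain ⟨w, hw⟩ := this
    exact ⟨w, hw⟩
  have hMdet : IsUnit M.det := (Matrix.isUnit_iff_isUnit_det M).mp hMunit
  congr 1
  ext e
  constructor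
  · rintro ⟨A, hA, rfl⟩
    exact ⟨A * X, le_trans (Matrix.rank_mul_le_left A X) hA, rfl⟩
  · rintro ⟨B, hB, rfl⟩
    refine ⟨B * M⁻¹ * Xᵀ, ?_, ?_⟩
    · exact le_trans (Matrix.rank_mul_le_left _ _)
        (le_trans (Matrix.rank_mul_le_left _ _) hB)
    · rw [Matrix.mul_assoc (B * M⁻¹), Matrix.mul_assoc B, ← hM,
        Matrix.nonsing_inv_mul M hMdet, Matrix.mul_one]
end

section
/- The rank-constrained least-squares problem attains its minimum: there exists a matrix A₀ ∈ ℝ^{n×n} with rank(A₀) ≤ k such that ‖Y − A₀·X‖_F ≤ ‖Y − A·X‖_F for every A ∈ ℝ^{n×n} with rank(A) ≤ k. -/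
open Matrix

section StmtSixAux

attribute [local instance] Matrix.frobeniusNormedAddCommGroup Matrix.frobeniusNormedSpace

lemma frobNorm_eq_norm {p q : ℕ} (A : Matrix (Fin p) (Fin q) ℝ) : frobNorm A = ‖A‖ := by
  rw [Matrix.frobenius_norm_def, frobNorm, Real.sqrt_eq_rpow]
  congr 1
  refine Finset.sum_congr rfl fun i _ => Finset.sum_congr rfl fun j _ => ?_
  rw [Real.norm_eq_abs, Real.rpow_two, sq_abs]

/-- Existence of a generalized inverse. -/
lemma exists_genInverse {n m : ℕ} (X : Matrix (Fin n) (Fin m) ℝ) :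
    ∃ Z : Matrix (Fin m) (Fin n) ℝ, X * Z * X = X := by
  set f : (Fin m → ℝ) →ₗ[ℝ] (Fin n → ℝ) := Matrix.toLin' X with hf
  obtain ⟨s, hs⟩ := f.rangeRestrict.exists_rightInverse_of_surjective f.range_rangeRestrict
  obtain ⟨q, hq⟩ := (LinearMap.range f).exists_isCompl
  set π := (LinearMap.range f).linearProjOfIsCompl q hq with hπ
  set g : (Fin n → ℝ) →ₗ[ℝ] (Fin m → ℝ) := s.comp π with hg
  have hfgf : f.comp (g.comp f) = f := by
    refine LinearMap.ext fun v => ?_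
    have h1 : π (f v) = ⟨f v, LinearMap.mem_range_self f v⟩ :=
      Submodule.linearProjOfIsCompl_apply_left hq ⟨f v, LinearMap.mem_range_self f v⟩
    have h2 : f (s ⟨f v, LinearMap.mem_range_self f v⟩) = f v := by
      have h3 := congrFun (congrArg DFunLike.coe hs) ⟨f v, LinearMap.mem_range_self f v⟩
      have h4 := congrArg Subtype.val h3
      simpa using h4
    simp only [LinearMap.comp_apply, hg, h1, h2]
  refine ⟨LinearMap.toMatrix' g, ?_⟩
  have : X * LinearMap.toMatrix' g * X
      = LinearMap.toMatrix' (f.comp (g.comp f)) := by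
    rw [LinearMap.toMatrix'_comp, LinearMap.toMatrix'_comp, hf,
      LinearMap.toMatrix'_toLin', ← Matrix.mul_assoc]
  rw [this, hfgf, hf, LinearMap.toMatrix'_toLin']

lemma det_gram_ne_zero_of_li {n r : ℕ} {N : Matrix (Fin n) (Fin r) ℝ}
    (h : LinearIndependent ℝ Nᵀ) : (Nᵀ * N).det ≠ 0 := by
  have h1 : Nᵀ.rank = r := by
    have h' : (Matrix.of fun x y => N y x).rank = r := by simpa using h.rank_matrix
    exact h'
  have h2 : (Nᵀ * N).rank = r := by
    rw [Matrix.rank_transpose_mul_self, ← Matrix.rank_transpose, h1]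
  have h3 : LinearMap.range (Nᵀ * N).mulVecLin = ⊤ := by
    apply Submodule.eq_top_of_finrank_eq
    rw [show Module.finrank ℝ (LinearMap.range (Nᵀ * N).mulVecLin) = (Nᵀ * N).rank from rfl, h2]
    simp
  have h4 : Function.Surjective (Nᵀ * N).mulVec := by
    intro y
    obtain ⟨x, hx⟩ := LinearMap.range_eq_top.mp h3 y
    exact ⟨x, hx⟩
  have h5 : IsUnit (Nᵀ * N) := Matrix.mulVec_surjective_iff_isUnit.mp h4
  exact isUnit_iff_ne_zero.mp ((Matrix.isUnit_iff_isUnit_det _).mp h5)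

lemma exists_li_cols {n k : ℕ} {A : Matrix (Fin n) (Fin n) ℝ} (h : k < A.rank) :
    ∃ ι : Fin (k + 1) → Fin n, LinearIndependent ℝ (A.submatrix id ι)ᵀ := by
  classical
  obtain ⟨b, hbsub, hbspan, hbli⟩ := exists_linearIndependent ℝ (Set.range Aᵀ)
  have hbfin : b.Finite := (Set.finite_range Aᵀ).subset hbsub
  haveI := hbfin.fintype
  have hcard : k + 1 ≤ Fintype.card b := by
    have h1 := finrank_span_set_eq_card hbli
    rw [hbspan] at h1
    have h2 : A.rank = b.toFinset.card := by
      rw [Matrix.rank_eq_finrank_span_cols, ← h1]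
      rfl
    rw [Set.toFinset_card] at h2
    omega
  obtain ⟨e⟩ : Nonempty (Fin (k + 1) ↪ b) := by
    rw [Function.Embedding.nonempty_iff_card_le, Fintype.card_fin]
    exact hcard
  have hmem : ∀ x : b, (x : Fin n → ℝ) ∈ Set.range Aᵀ := fun x => hbsub x.2
  choose g hg using fun x : b => Set.mem_range.mp (hmem x)
  refine ⟨fun j => g (e j), ?_⟩
  have heq : (A.submatrix id fun j => g (e j))ᵀ = (fun x : b => (x : Fin n → ℝ)) ∘ e := by
    funext j
    have := hg (e j)
    funext i
    exact congrFun this i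
  rw [heq]
  exact hbli.comp e e.injective

lemma rank_le_iff_gram {n k : ℕ} (A : Matrix (Fin n) (Fin n) ℝ) :
    A.rank ≤ k ↔
      ∀ ι : Fin (k + 1) → Fin n, ((A.submatrix id ι)ᵀ * A.submatrix id ι).det = 0 := by
  constructor
  · intro h ι
    by_contra hd
    have hu : IsUnit ((A.submatrix id ι)ᵀ * A.submatrix id ι) :=
      (Matrix.isUnit_iff_isUnit_det _).mpr (isUnit_iff_ne_zero.mpr hd)
    have h1 : ((A.submatrix id ι)ᵀ * A.submatrix id ι).rank = k + 1 := by
      rw [Matrix.rank_of_isUnit _ hu, Fintype.card_fin]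
    have h2 : (A.submatrix id ι).rank ≤ A.rank := by
      have heq : A.submatrix id ι
          = A * (1 : Matrix (Fin n) (Fin n) ℝ).submatrix (Equiv.refl (Fin n)) ι := by
        rw [Matrix.mul_submatrix_one]
        rfl
      rw [heq]
      exact Matrix.rank_mul_le_left _ _
    rw [Matrix.rank_transpose_mul_self] at h1
    omega
  · intro h
    by_contra hr
    push_neg at hr
    obtain ⟨ι, hι⟩ := exists_li_cols hr
    exact det_gram_ne_zero_of_li hι (h ι)

lemma isClosed_rank_le {n k : ℕ} :
    IsClosed {A : Matrix (Fin n) (Fin n) ℝ | A.rank ≤ k} := by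
  have heq : {A : Matrix (Fin n) (Fin n) ℝ | A.rank ≤ k} =
      ⋂ ι : Fin (k + 1) → Fin n,
        {A | ((A.submatrix id ι)ᵀ * A.submatrix id ι).det = 0} := by
    ext A
    simp only [Set.mem_setOf_eq, Set.mem_iInter, rank_le_iff_gram]
  rw [heq]
  refine isClosed_iInter fun ι => isClosed_eq ?_ continuous_const
  exact ((continuous_id.matrix_submatrix id ι).matrix_transpose.matrix_mul
    (continuous_id.matrix_submatrix id ι)).matrix_det

theorem stmt_6' (n m k : ℕ) (hk : 0 < k) (hkm : k ≤ m) (hmn : m ≤ n)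
    (X Y : Matrix (Fin n) (Fin m) ℝ) :
    ∃ A₀ : Matrix (Fin n) (Fin n) ℝ, A₀.rank ≤ k ∧
      ∀ A : Matrix (Fin n) (Fin n) ℝ, A.rank ≤ k →
        frobNorm (Y - A₀ * X) ≤ frobNorm (Y - A * X) := by
  obtain ⟨Z, hZ⟩ := exists_genInverse X
  set R : ℝ := (‖Y‖ + ‖Y‖) * ‖Z‖ with hR
  have hR0 : 0 ≤ R := by positivity
  set K : Set (Matrix (Fin n) (Fin n) ℝ) :=
    {A | A.rank ≤ k} ∩ Metric.closedBall 0 R with hK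
  have h0K : (0 : Matrix (Fin n) (Fin n) ℝ) ∈ K := by
    constructor
    · simp [Matrix.rank_zero]
    · simpa [Metric.mem_closedBall] using hR0
  have hKc : IsCompact K := by
    refine (isCompact_closedBall (0 : Matrix (Fin n) (Fin n) ℝ) R).of_isClosed_subset
      (isClosed_rank_le.inter Metric.isClosed_closedBall) Set.inter_subset_right
  have hlin : Continuous fun A : Matrix (Fin n) (Fin n) ℝ => A * X :=
    LinearMap.continuous_of_finiteDimensional
      ({ toFun := fun A => A * X
         map_add' := fun a b => Matrix.add_mul a b X
         map_smul' := fun c a => Matrix.smul_mul c a X } :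
        Matrix (Fin n) (Fin n) ℝ →ₗ[ℝ] Matrix (Fin n) (Fin m) ℝ)
  have hf : Continuous fun A : Matrix (Fin n) (Fin n) ℝ => ‖Y - A * X‖ :=
    (continuous_const.sub hlin).norm
  obtain ⟨A₀, hA₀K, hmin⟩ := hKc.exists_isMinOn ⟨0, h0K⟩ hf.continuousOn
  refine ⟨A₀, hA₀K.1, fun A hA => ?_⟩
  rw [frobNorm_eq_norm, frobNorm_eq_norm]
  by_cases hcase : ‖Y - A * X‖ ≤ ‖Y‖
  · set A' := A * X * Z with hA'
    have h1 : A' * X = A * X := by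
      rw [hA', Matrix.mul_assoc, Matrix.mul_assoc, ← Matrix.mul_assoc X Z X, hZ]
    have h2 : A'.rank ≤ k :=
      ((Matrix.rank_mul_le_left (A * X) Z).trans
        ((Matrix.rank_mul_le_left A X).trans hA))
    have h3 : ‖A'‖ ≤ R := by
      calc ‖A * X * Z‖ ≤ ‖A * X‖ * ‖Z‖ := Matrix.frobenius_norm_mul _ _
        _ ≤ (‖Y‖ + ‖Y‖) * ‖Z‖ := by
            refine mul_le_mul_of_nonneg_right ?_ (norm_nonneg _)
            calc ‖A * X‖ = ‖Y - (Y - A * X)‖ := by rw [sub_sub_cancel]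
              _ ≤ ‖Y‖ + ‖Y - A * X‖ := norm_sub_le _ _
              _ ≤ ‖Y‖ + ‖Y‖ := by linarith
    have hA'K : A' ∈ K := by
      refine ⟨h2, ?_⟩
      simpa [Metric.mem_closedBall] using h3
    have := isMinOn_iff.mp hmin A' hA'K
    rw [h1] at this
    exact this
  · push_neg at hcase
    have h0 := isMinOn_iff.mp hmin 0 h0K
    simp only [Matrix.zero_mul, sub_zero] at h0
    linarith

end StmtSixAux

/-- Existence of a minimiser of the rank-constrained least-squares problem. -/
theorem stmt_6 (n m k : ℕ) (hk : 0 < k) (hkm : k ≤ m) (hmn : m ≤ n)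
    (X Y : Matrix (Fin n) (Fin m) ℝ) :
    ∃ A₀ : Matrix (Fin n) (Fin n) ℝ, A₀.rank ≤ k ∧
      ∀ A : Matrix (Fin n) (Fin n) ℝ, A.rank ≤ k →
        frobNorm (Y - A₀ * X) ≤ frobNorm (Y - A * X) := by
  exact stmt_6' n m k hk hkm hmn X Y
end

section
/- There exist matrices P, Q ∈ ℝ^{n×k} such that (i) Pᵀ·P = I_k, (ii) X·Yᵀ·P = X·Xᵀ·Q, and (iii) P·Qᵀ is a minimiser of the rank-constrained problem: ‖Y − P·Qᵀ·X‖_F ≤ ‖Y − A·X‖_F for every A ∈ ℝ^{n×n} with rank(A) ≤ k (Lemma B.1 of the paper). -/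
open Matrix Module

attribute [local instance] Matrix.frobeniusSeminormedAddCommGroup
  Matrix.frobeniusNormedAddCommGroup Matrix.frobeniusNormedSpace

local notation "⟪" x ", " y "⟫" => @inner ℝ _ _ x y

lemma ip_trace {a b : ℕ} (A B : Matrix (Fin a) (Fin b) ℝ) :
    (Aᵀ * B).trace = ∑ i, ∑ j, A i j * B i j := by
  simp only [Matrix.trace, Matrix.diag, Matrix.mul_apply, Matrix.transpose_apply]
  exact (Finset.sum_comm)

lemma sumSq_eq_trace {a b : ℕ} (A : Matrix (Fin a) (Fin b) ℝ) :
    ∑ i, ∑ j, A i j ^ 2 = (Aᵀ * A).trace := by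
  rw [ip_trace]
  simp [sq]

lemma frob_eq {a b : ℕ} (A : Matrix (Fin a) (Fin b) ℝ) :
    ‖A‖ = Real.sqrt (∑ i, ∑ j, A i j ^ 2) := by
  rw [Matrix.frobenius_norm_def, Real.sqrt_eq_rpow]
  congr 1
  refine Finset.sum_congr rfl fun i _ => Finset.sum_congr rfl fun j _ => ?_
  rw [Real.norm_eq_abs, Real.rpow_two, sq_abs, sq]

lemma frobNorm_eq {a b : ℕ} (A : Matrix (Fin a) (Fin b) ℝ) : frobNorm A = ‖A‖ :=
  (frob_eq A).symm

lemma orth_sumSq {n k m : ℕ} {P : Matrix (Fin n) (Fin k) ℝ} (hP : Pᵀ * P = 1)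
    (Z : Matrix (Fin k) (Fin m) ℝ) :
    ∑ i, ∑ j, (P * Z) i j ^ 2 = ∑ i, ∑ j, Z i j ^ 2 := by
  rw [sumSq_eq_trace, sumSq_eq_trace, Matrix.transpose_mul]
  rw [show Zᵀ * Pᵀ * (P * Z) = Zᵀ * (Pᵀ * P) * Z by rw [Matrix.mul_assoc, Matrix.mul_assoc,
    Matrix.mul_assoc], hP, Matrix.mul_one]

lemma orth_norm {n k m : ℕ} {P : Matrix (Fin n) (Fin k) ℝ} (hP : Pᵀ * P = 1)
    (Z : Matrix (Fin k) (Fin m) ℝ) : ‖P * Z‖ = ‖Z‖ := by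
  rw [frob_eq, frob_eq, orth_sumSq hP]

lemma expand_sq {a b : ℕ} (U V : Matrix (Fin a) (Fin b) ℝ) (t : ℝ) :
    ∑ i, ∑ j, ((U - t • V) i j) ^ 2
      = (∑ i, ∑ j, U i j ^ 2) - 2 * t * (Uᵀ * V).trace + t ^ 2 * ∑ i, ∑ j, V i j ^ 2 := by
  rw [ip_trace]
  calc ∑ i, ∑ j, ((U - t • V) i j) ^ 2
      = ∑ i, ∑ j, (U i j ^ 2 - 2 * t * (U i j * V i j) + t ^ 2 * V i j ^ 2) := by
        refine Finset.sum_congr rfl fun i _ => Finset.sum_congr rfl fun j _ => ?_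
        simp only [Matrix.sub_apply, Matrix.smul_apply, smul_eq_mul]
        ring
    _ = _ := by
        simp [Finset.sum_add_distrib, Finset.sum_sub_distrib, Finset.mul_sum]

lemma sq_le_of_sqrt_le {x y : ℝ} (hx : 0 ≤ x) (hy : 0 ≤ y)
    (h : Real.sqrt x ≤ Real.sqrt y) : x ≤ y := by
  rw [← Real.sq_sqrt hx, ← Real.sq_sqrt hy]
  exact pow_le_pow_left₀ (Real.sqrt_nonneg _) h 2

lemma crit {δ c d : ℝ} (hδ : 0 < δ) (hd : 0 ≤ d)
    (h : ∀ t : ℝ, |t| ≤ δ → 0 ≤ -(2 * t * c) + t ^ 2 * d) : c ≤ 0 := by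
  by_contra hc
  push_neg at hc
  set t := min δ (c / (d + 1)) with ht
  have htpos : 0 < t := lt_min hδ (div_pos hc (by linarith))
  have ht1 : t ≤ δ := min_le_left _ _
  have ht2 : t ≤ c / (d + 1) := min_le_right _ _
  have htd : t * (d + 1) ≤ c := (le_div_iff₀ (by linarith)).mp ht2
  have h0 := h t (by rw [abs_of_pos htpos]; exact ht1)
  nlinarith [mul_le_mul_of_nonneg_left htd (by positivity : (0:ℝ) ≤ 2 * t),
    mul_pos htpos htpos]

lemma euc_inner {n : ℕ} (x y : EuclideanSpace ℝ (Fin n)) : ⟪x, y⟫ = ∑ i, x i * y i := by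
  simp [PiLp.inner_apply, RCLike.inner_apply, mul_comm]

lemma factor {n m k : ℕ} (hkn : k ≤ n) (B : Matrix (Fin n) (Fin m) ℝ) (hB : B.rank ≤ k) :
    ∃ P : Matrix (Fin n) (Fin k) ℝ, Pᵀ * P = 1 ∧ P * (Pᵀ * B) = B := by
  classical
  set E := EuclideanSpace ℝ (Fin n) with hE
  let V : Submodule ℝ E := Submodule.span ℝ (Set.range (fun c => (WithLp.toLp 2 (Bᵀ c) : E)))
  haveI : FiniteDimensional ℝ V := inferInstance
  set r := finrank ℝ V with hr
  have hrank : B.rank = r := by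
    rw [Matrix.rank_eq_finrank_span_cols B,
      ← LinearEquiv.finrank_map_eq (WithLp.linearEquiv 2 ℝ (Fin n → ℝ)).symm, Submodule.map_span,
      ← Set.range_comp]
    rfl
  have hrk : r ≤ k := hrank ▸ hB
  have hrn : r ≤ n := hrk.trans hkn
  let b0 := stdOrthonormalBasis ℝ V
  let v : Fin n → E := fun i => if h : (i : ℕ) < r then (b0 ⟨i, h⟩ : E) else 0
  let s : Set (Fin n) := {i | (i : ℕ) < r}
  have hv : Orthonormal ℝ (s.restrict v) := by
    rw [orthonormal_iff_ite]
    rintro ⟨i, hi⟩ ⟨j, hj⟩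
    have hi' : (i : ℕ) < r := hi
    have hj' : (j : ℕ) < r := hj
    simp only [Set.restrict_apply, v, dif_pos hi', dif_pos hj']
    change inner ℝ (v i) (v j) = _; simp only [v, dif_pos hi', dif_pos hj']; rw [← Submodule.coe_inner]
    rw [orthonormal_iff_ite.mp b0.orthonormal ⟨i, hi'⟩ ⟨j, hj'⟩]
    congr 1
    simp only [eq_iff_iff, Fin.mk.injEq, Subtype.mk.injEq, Fin.ext_iff]
  obtain ⟨b, hb⟩ := hv.exists_orthonormalBasis_extension_of_card_eq
    (by show finrank ℝ (EuclideanSpace ℝ (Fin n)) = Fintype.card (Fin n)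
        rw [finrank_euclideanSpace_fin, Fintype.card_fin])
  have key : ∀ w : E, w ∈ V → ∀ i : Fin n, r ≤ (i : ℕ) → ⟪b i, w⟫ = 0 := by
    intro w hw i hi
    have hexp : (⟨w, hw⟩ : V) = ∑ t, b0.repr ⟨w, hw⟩ t • b0 t := (b0.sum_repr ⟨w, hw⟩).symm
    have hexp' : w = ∑ t, b0.repr ⟨w, hw⟩ t • (b0 t : E) := by
      have := congrArg (Submodule.subtype V) hexp
      simpa using this
    rw [hexp', inner_sum]
    refine Finset.sum_eq_zero fun t _ => ?_
    rw [real_inner_smul_right]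
    have htv : (b0 t : E) = b (Fin.castLE hrn t) := by
      have hmem : Fin.castLE hrn t ∈ s := by
        simpa [s] using t.isLt
      rw [hb _ hmem]
      simp only [v, Fin.coe_castLE]
      rw [dif_pos t.isLt]
    rw [htv, orthonormal_iff_ite.mp b.orthonormal]
    have : i ≠ Fin.castLE hrn t := by
      intro hcon
      rw [hcon] at hi
      exact absurd t.isLt (not_lt.mpr (by simpa using hi))
    rw [if_neg this, mul_zero]
  refine ⟨Matrix.of fun i j => b (Fin.castLE hkn j) i, ?_, ?_⟩
  · ext a c
    simp only [Matrix.mul_apply, Matrix.transpose_apply, Matrix.one_apply, Matrix.of_apply]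
    have := orthonormal_iff_ite.mp b.orthonormal (Fin.castLE hkn a) (Fin.castLE hkn c)
    rw [euc_inner] at this
    rw [this]
    congr 1
    simp [Fin.ext_iff, eq_iff_iff]
  · ext i c
    have hw : (WithLp.toLp 2 (Bᵀ c) : E) ∈ V := Submodule.subset_span ⟨c, rfl⟩
    have hcol : ∀ j : Fin k, ∑ l, b (Fin.castLE hkn j) l * B l c
        = ⟪b (Fin.castLE hkn j), (WithLp.toLp 2 (Bᵀ c) : E)⟫ := by
      intro j
      rw [euc_inner]
      rfl
    simp only [Matrix.mul_apply, Matrix.transpose_apply, Matrix.of_apply]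
    calc ∑ j, b (Fin.castLE hkn j) i * ∑ l, b (Fin.castLE hkn j) l * B l c
        = ∑ j, ⟪b (Fin.castLE hkn j), (WithLp.toLp 2 (Bᵀ c) : E)⟫ * b (Fin.castLE hkn j) i := by
          refine Finset.sum_congr rfl fun j _ => ?_
          rw [hcol j, mul_comm]
      _ = ∑ i' ∈ Finset.univ.map (Fin.castLEEmb hkn), ⟪b i', (WithLp.toLp 2 (Bᵀ c) : E)⟫ * b i' i := by
          rw [Finset.sum_map]; rfl
      _ = ∑ i' : Fin n, ⟪b i', (WithLp.toLp 2 (Bᵀ c) : E)⟫ * b i' i := by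
          refine Finset.sum_subset (Finset.subset_univ _) fun x _ hx => ?_
          have hxk : k ≤ (x : ℕ) := by
            by_contra hcon
            push_neg at hcon
            exact hx (Finset.mem_map.mpr ⟨⟨x, hcon⟩, Finset.mem_univ _, by simp [Fin.ext_iff]⟩)
          rw [key _ hw x (hrk.trans hxk), zero_mul]
      _ = B i c := by
          have h3 : ∑ i' : Fin n, ⟪b i', (WithLp.toLp 2 (Bᵀ c) : E)⟫ * b i' i
              = (∑ i' : Fin n, ⟪b i', (WithLp.toLp 2 (Bᵀ c) : E)⟫ • b i' : E) i := by
            rw [show ((∑ i' : Fin n, ⟪b i', (WithLp.toLp 2 (Bᵀ c) : E)⟫ • b i' : E) i)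
                = ∑ i' : Fin n, (⟪b i', (WithLp.toLp 2 (Bᵀ c) : E)⟫ • b i' : E) i by rw [WithLp.ofLp_sum, Finset.sum_apply]]
            rfl
          rw [h3, b.sum_repr' (WithLp.toLp 2 (Bᵀ c) : E)]
          rfl

/-- Lemma B.1: the rank-constrained problem admits a minimiser of the form `P Qᵀ` with
`Pᵀ P = I_k` and `X Yᵀ P = X Xᵀ Q`. -/
theorem stmt_10 (n m k : ℕ) (hk : 0 < k) (hkm : k ≤ m) (hmn : m ≤ n)
    (X Y : Matrix (Fin n) (Fin m) ℝ) :
    ∃ P Q : Matrix (Fin n) (Fin k) ℝ,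
      Pᵀ * P = 1 ∧
      X * Yᵀ * P = X * Xᵀ * Q ∧
      ∀ A : Matrix (Fin n) (Fin n) ℝ, A.rank ≤ k →
        frobNorm (Y - P * Qᵀ * X) ≤ frobNorm (Y - A * X) := by
  classical
  have hkn : k ≤ n := hkm.trans hmn
  -- the linear map W ↦ W * X and its range
  let L : Matrix (Fin k) (Fin n) ℝ →ₗ[ℝ] Matrix (Fin k) (Fin m) ℝ :=
    { toFun := fun W => W * X
      map_add' := fun a b => Matrix.add_mul a b X
      map_smul' := fun c a => Matrix.smul_mul c a X }
  let S := LinearMap.range L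
  set R : ℝ := 2 * ‖Y‖ + 1 with hR
  -- a base point in the Stiefel manifold
  let P0 : Matrix (Fin n) (Fin k) ℝ := Matrix.of fun i j => if (i : ℕ) = (j : ℕ) then 1 else 0
  have hP0 : P0ᵀ * P0 = 1 := by
    ext a c
    simp only [Matrix.mul_apply, Matrix.transpose_apply, Matrix.one_apply, P0, Matrix.of_apply]
    rw [Finset.sum_eq_single (Fin.castLE hkn a)]
    · simp [Fin.ext_iff]
    · intro i _ hne
      have : (i : ℕ) ≠ (a : ℕ) := fun h => hne (Fin.ext (by simpa using h))
      simp [this]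
    · intro h
      exact absurd (Finset.mem_univ _) h
  -- the compact constraint set
  let K : Set ((Matrix (Fin n) (Fin k) ℝ) × (Matrix (Fin k) (Fin m) ℝ)) :=
    {p | p.1ᵀ * p.1 = 1 ∧ p.2 ∈ S ∧ ‖p.2‖ ≤ R}
  have hRpos : (0:ℝ) ≤ R := by positivity
  have hK0 : (P0, (0 : Matrix (Fin k) (Fin m) ℝ)) ∈ K :=
    ⟨hP0, S.zero_mem, by simpa using hRpos⟩
  have hKc : IsClosed K := by
    have h1 : IsClosed {p : (Matrix (Fin n) (Fin k) ℝ) × (Matrix (Fin k) (Fin m) ℝ) |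
        p.1ᵀ * p.1 = 1} :=
      isClosed_eq ((continuous_fst.matrix_transpose).matrix_mul continuous_fst) continuous_const
    have h2 : IsClosed {p : (Matrix (Fin n) (Fin k) ℝ) × (Matrix (Fin k) (Fin m) ℝ) |
        p.2 ∈ S} := by
      have := S.closed_of_finiteDimensional
      exact this.preimage continuous_snd
    have h3 : IsClosed {p : (Matrix (Fin n) (Fin k) ℝ) × (Matrix (Fin k) (Fin m) ℝ) |
        ‖p.2‖ ≤ R} :=
      isClosed_le (continuous_snd.norm) continuous_const
    exact h1.inter (h2.inter h3)
  have hnormP : ∀ p ∈ K, ‖p.1‖ = Real.sqrt k := by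
    rintro ⟨p1, p2⟩ ⟨h1, -, -⟩
    rw [frob_eq, sumSq_eq_trace, h1]
    simp
  have hKb : Bornology.IsBounded K := by
    refine Bornology.IsBounded.subset
      (Bornology.IsBounded.prod
        (Metric.isBounded_closedBall (x := (0 : Matrix (Fin n) (Fin k) ℝ)) (r := Real.sqrt k))
        (Metric.isBounded_closedBall (x := (0 : Matrix (Fin k) (Fin m) ℝ)) (r := R))) ?_
    rintro ⟨p1, p2⟩ hp
    refine ⟨mem_closedBall_zero_iff.mpr ?_, mem_closedBall_zero_iff.mpr hp.2.2⟩
    exact le_of_eq (hnormP _ hp)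
  have hKcomp : IsCompact K := Metric.isCompact_of_isClosed_isBounded hKc hKb
  have hcont : Continuous (fun p : (Matrix (Fin n) (Fin k) ℝ) × (Matrix (Fin k) (Fin m) ℝ) =>
      ‖Y - p.1 * p.2‖) :=
    (continuous_const.sub (continuous_fst.matrix_mul continuous_snd)).norm
  obtain ⟨q, hqK, hqmin⟩ := hKcomp.exists_isMinOn ⟨_, hK0⟩ hcont.continuousOn
  obtain ⟨P, Z⟩ := q
  obtain ⟨hPo, hZS, hZR⟩ := hqK
  have hmin : ∀ p ∈ K, ‖Y - P * Z‖ ≤ ‖Y - p.1 * p.2‖ := fun p hp => hqmin hp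
  obtain ⟨W, hW⟩ := hZS
  have hWX : W * X = Z := hW
  -- basic bound on the minimum value
  have hminY : ‖Y - P * Z‖ ≤ ‖Y‖ := by
    have := hmin _ hK0
    simpa using this
  have hZR' : ‖Z‖ ≤ 2 * ‖Y‖ := by
    have h1 : ‖P * Z‖ = ‖Z‖ := orth_norm hPo Z
    have h2 : ‖P * Z‖ ≤ ‖P * Z - Y‖ + ‖Y‖ := by
      have := norm_add_le (P * Z - Y) Y
      simpa using this
    have h3 : ‖P * Z - Y‖ = ‖Y - P * Z‖ := norm_sub_rev _ _
    linarith
  -- first-order optimality: the normal equation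
  have hc : ∀ H : Matrix (Fin k) (Fin n) ℝ, ((Y - P * Z)ᵀ * (P * (H * X))).trace ≤ 0 := by
    intro H
    set D : Matrix (Fin k) (Fin m) ℝ := H * X with hD
    have hDS : D ∈ S := ⟨H, rfl⟩
    have hδ : (0:ℝ) < 1 / (‖D‖ + 1) := by positivity
    refine crit (d := ∑ i, ∑ j, (P * D) i j ^ 2) hδ (by positivity) ?_
    intro t ht
    have hmem : (P, Z + t • D) ∈ K := by
      refine ⟨hPo, S.add_mem ⟨W, hW⟩ (S.smul_mem t hDS), ?_⟩
      have h1 : ‖Z + t • D‖ ≤ ‖Z‖ + |t| * ‖D‖ := by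
        calc ‖Z + t • D‖ ≤ ‖Z‖ + ‖t • D‖ := norm_add_le _ _
          _ = ‖Z‖ + |t| * ‖D‖ := by rw [norm_smul, Real.norm_eq_abs]
      have h2 : |t| * ‖D‖ ≤ 1 := by
        calc |t| * ‖D‖ ≤ (1 / (‖D‖ + 1)) * ‖D‖ := by
              apply mul_le_mul_of_nonneg_right ht (norm_nonneg _)
          _ ≤ 1 := by
              rw [div_mul_eq_mul_div, one_mul, div_le_one (by positivity)]
              linarith
      rw [hR]
      linarith
    have hle := hmin _ hmem
    have hsq : ∑ i, ∑ j, (Y - P * Z) i j ^ 2 ≤ ∑ i, ∑ j, (Y - P * (Z + t • D)) i j ^ 2 := by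
      apply sq_le_of_sqrt_le
      · positivity
      · positivity
      · rw [← frob_eq, ← frob_eq]
        exact hle
    have heq : Y - P * (Z + t • D) = (Y - P * Z) - t • (P * D) := by
      rw [Matrix.mul_add, Matrix.mul_smul]
      abel
    rw [heq, expand_sq] at hsq
    have : 0 ≤ -(2 * t * ((Y - P * Z)ᵀ * (P * D)).trace) + t ^ 2 * ∑ i, ∑ j, (P * D) i j ^ 2 := by
      linarith
    exact this
  have hc0 : ∀ H : Matrix (Fin k) (Fin n) ℝ, ((Y - P * Z)ᵀ * (P * (H * X))).trace = 0 := by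
    intro H
    have h1 := hc H
    have h2 := hc (-H)
    rw [Matrix.neg_mul, Matrix.mul_neg, Matrix.mul_neg, Matrix.trace_neg] at h2
    linarith
  -- the matrix G := X (Y - PZ)ᵀ P vanishes
  have hG : X * ((Y - P * Z)ᵀ * P) = 0 := by
    set G : Matrix (Fin n) (Fin k) ℝ := X * ((Y - P * Z)ᵀ * P) with hGdef
    have htr : (Gᵀ * G).trace = 0 := by
      have h1 := hc0 Gᵀ
      have h2 : ((Y - P * Z)ᵀ * (P * (Gᵀ * X))).trace = (Gᵀ * G).trace := by
        have e1 : (Y - P * Z)ᵀ * (P * (Gᵀ * X)) = ((Y - P * Z)ᵀ * P * Gᵀ) * X := by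
          simp only [Matrix.mul_assoc]
        rw [e1, Matrix.trace_mul_comm]
        have e2 : X * ((Y - P * Z)ᵀ * P * Gᵀ) = G * Gᵀ := by
          rw [hGdef]
          simp only [Matrix.mul_assoc]
        rw [e2, Matrix.trace_mul_comm]
      rw [← h2, h1]
    have hsum : ∑ i, ∑ j, G i j ^ 2 = 0 := by rw [sumSq_eq_trace, htr]
    ext i j
    have h1 : ∀ i' ∈ Finset.univ, (0:ℝ) ≤ ∑ j', G i' j' ^ 2 :=
      fun i' _ => Finset.sum_nonneg fun j' _ => sq_nonneg _
    have h2 := (Finset.sum_eq_zero_iff_of_nonneg h1).mp hsum i (Finset.mem_univ i)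
    have h3 := (Finset.sum_eq_zero_iff_of_nonneg
      (fun j' _ => sq_nonneg (G i j'))).mp h2 j (Finset.mem_univ j)
    simpa using pow_eq_zero_iff (n := 2) (by norm_num) |>.mp h3
  refine ⟨P, Wᵀ, hPo, ?_, ?_⟩
  · -- normal equation
    have hexp : X * ((Y - P * Z)ᵀ * P) = X * Yᵀ * P - X * Zᵀ := by
      rw [Matrix.transpose_sub, Matrix.sub_mul, Matrix.mul_sub, Matrix.transpose_mul]
      congr 1
      · rw [Matrix.mul_assoc]
      · rw [show Zᵀ * Pᵀ * P = Zᵀ * (Pᵀ * P) by rw [Matrix.mul_assoc], hPo, Matrix.mul_one]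
    rw [hexp] at hG
    have h4 : X * Yᵀ * P = X * Zᵀ := by
      have := sub_eq_zero.mp hG
      exact this
    rw [h4, ← hWX]
    rw [Matrix.transpose_mul, ← Matrix.mul_assoc]
  · -- minimality
    intro A hA
    have hPQX : P * Wᵀᵀ * X = P * Z := by
      rw [Matrix.transpose_transpose, Matrix.mul_assoc, hWX]
    rw [hPQX, frobNorm_eq, frobNorm_eq]
    set B : Matrix (Fin n) (Fin m) ℝ := A * X with hB
    have hBrank : B.rank ≤ k := le_trans (Matrix.rank_mul_le_left A X) hA
    by_cases hBR : ‖B‖ ≤ R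
    · obtain ⟨P', hP'o, hP'B⟩ := factor hkn B hBrank
      have hZ'S : P'ᵀ * B ∈ S := ⟨P'ᵀ * A, by show (P'ᵀ * A) * X = P'ᵀ * B; rw [hB, Matrix.mul_assoc]⟩
      have hZ'R : ‖P'ᵀ * B‖ ≤ R := by
        have : ‖P' * (P'ᵀ * B)‖ = ‖P'ᵀ * B‖ := orth_norm hP'o _
        rw [hP'B] at this
        rw [← this]
        exact hBR
      have hmem : (P', P'ᵀ * B) ∈ K := ⟨hP'o, hZ'S, hZ'R⟩
      have := hmin _ hmem
      simpa [hP'B] using this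
    · push_neg at hBR
      have h1 : ‖B‖ - ‖Y‖ ≤ ‖Y - B‖ := by
        have := norm_sub_norm_le B Y
        calc ‖B‖ - ‖Y‖ ≤ ‖B - Y‖ := this
          _ = ‖Y - B‖ := norm_sub_rev _ _
      have : ‖Y‖ ≤ ‖Y - B‖ := by
        rw [hR] at hBR
        linarith
      linarith
end

section
/- Pythagorean decomposition of the objective at stationary points: if P ∈ ℝ^{n×k} satisfies Pᵀ·P = I_k and Q ∈ ℝ^{n×k} satisfies Xᵀ·Q = Π·Yᵀ·P, then ‖Y − P·Qᵀ·X‖_F² = ‖Z − P·Pᵀ·Z‖_F² + ‖Y·(I_m − Π)‖_F². -/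
open Matrix

/-- Pythagorean decomposition of the objective at stationary points: if `Pᵀ P = I_k` and
`Xᵀ Q = Π Yᵀ P` (with `Π = G X`, `Z = Y Π`), then
`‖Y - P Qᵀ X‖_F² = ‖Z - P Pᵀ Z‖_F² + ‖Y (I - Π)‖_F²`. -/
theorem stmt_14 (n m k : ℕ) (hk : 0 < k) (hkm : k ≤ m) (hmn : m ≤ n)
    (X Y : Matrix (Fin n) (Fin m) ℝ) (G : Matrix (Fin m) (Fin n) ℝ)
    (hG1 : X * G * X = X) (hG2 : G * X * G = G)
    (hG3 : (X * G)ᵀ = X * G) (hG4 : (G * X)ᵀ = G * X)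
    (P Q : Matrix (Fin n) (Fin k) ℝ) (hP : Pᵀ * P = 1)
    (hQ : Xᵀ * Q = (G * X) * Yᵀ * P) :
    frobNorm (Y - P * Qᵀ * X) ^ 2 =
      frobNorm (Y * (G * X) - P * Pᵀ * (Y * (G * X))) ^ 2 +
      frobNorm (Y * (1 - G * X)) ^ 2 := by
  have hPr2 : (G * X) * (G * X) = G * X := by
    rw [← Matrix.mul_assoc (G*X) G X, hG2]
  have hQ' : Qᵀ * X = Pᵀ * (Y * (G * X)) := by
    have h := congrArg Matrix.transpose hQ
    simp only [transpose_mul, transpose_transpose, hG4] at h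
    rw [h]
  set A := Y * (G * X) - P * Pᵀ * (Y * (G * X)) with hA
  set B := Y * (1 - G * X) with hB
  have hdecomp : Y - P * Qᵀ * X = A + B := by
    rw [hA, hB, Matrix.mul_assoc P Qᵀ X, hQ', Matrix.mul_sub, Matrix.mul_one,
      ← Matrix.mul_assoc P Pᵀ]
    abel
  have hBA : B * Aᵀ = 0 := by
    have hAT : Aᵀ = (G * X) * (Yᵀ - Yᵀ * (P * Pᵀ)) := by
      rw [hA]
      simp only [transpose_sub, transpose_mul, transpose_transpose, hG4]
      rw [Matrix.mul_sub]
      congr 1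
      simp [Matrix.mul_assoc]
    have h0 : (Y - Y * (G * X)) * (G * X) = 0 := by
      rw [Matrix.sub_mul, Matrix.mul_assoc, hPr2, sub_self]
    rw [hB, hAT, Matrix.mul_sub, Matrix.mul_one, ← Matrix.mul_assoc, h0, Matrix.zero_mul]
  have hcross : ∑ i, ∑ j, A i j * B i j = 0 := by
    have key : ∀ i : Fin n, (B * Aᵀ) i i = ∑ j, A i j * B i j := by
      intro i
      rw [Matrix.mul_apply]
      exact Finset.sum_congr rfl fun j _ => by rw [transpose_apply, mul_comm]
    calc ∑ i, ∑ j, A i j * B i j = ∑ i, (B * Aᵀ) i i := by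
          exact (Finset.sum_congr rfl fun i _ => (key i).symm)
    _ = 0 := by simp [hBA]
  rw [hdecomp, frobNorm_sq, frobNorm_sq, frobNorm_sq]
  have expand : ∀ i j, ((A + B) i j) ^ 2 = A i j ^ 2 + B i j ^ 2 + 2 * (A i j * B i j) := by
    intro i j
    simp only [Matrix.add_apply]
    ring
  simp_rw [expand, Finset.sum_add_distrib]
  have h2 : ∑ i, ∑ j, 2 * (A i j * B i j) = 2 * ∑ i, ∑ j, A i j * B i j := by
    simp_rw [Finset.mul_sum]
  rw [h2, hcross]
  ring
end
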